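/- Let O_K be the ring of integers of K = Q₃(ω) with ω a primitive cube root of unity, π = ω − 1, and v₃ the valuation with v₃(3) = 1. Let R be a commutative O_K-algebra, r ∈ O_K, ξ an indeterminate, g ∈ R[[rξ]], and k an indeterminate. Then the binomial expansion (1 + rπξg)^k := Σ_{n≥0} C(k,n)(rπξg)ⁿ lies in 1 + rπk·ξ·R[[k, rξ]]. -/

import Mathlib

set_option synthInstance.maxHeartbeats 1000000
set_option maxHeartbeats 1000000


noncomputable abbrev K3 : Type :=
  Polynomial ℚ_[3] ⧸ Ideal.span {(Polynomial.X : Polynomial ℚ_[3]) ^ 2 + Polynomial.X + 1}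

noncomputable instance : Algebra ℤ_[3] K3 :=
  ((algebraMap ℚ_[3] K3).comp (algebraMap ℤ_[3] ℚ_[3])).toAlgebra

noncomputable def ω3 : K3 := Ideal.Quotient.mk _ Polynomial.X
noncomputable def π3 : K3 := ω3 - 1

/-- The binomial coefficient `C(k, n) = k(k-1)⋯(k-n+1)/n!` evaluated at `k = X 0`, as a
two-variable power series (in the variables `k = X 0` and `ξ = X 1`). -/
noncomputable def binomK (A : Type) [CommRing A] [Algebra ℚ A] (n : ℕ) :
    MvPowerSeries (Fin 2) A :=
  ((n.factorial : ℚ)⁻¹) • ∏ i ∈ Finset.range n, (MvPowerSeries.X 0 - (i : MvPowerSeries (Fin 2) A))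

/-- The binomial expansion `(1 + rπξg)^k = Σ_{n≥0} C(k,n)(rπξg)ⁿ`, a well-defined
two-variable power series in `k = X 0` and `ξ = X 1` since `(rπξg)ⁿ` is divisible
by `ξⁿ`. -/
noncomputable def binomialExpansion (A : Type) [CommRing A] [Algebra K3 A] [Algebra ℚ A]
    (r : K3) (g : MvPowerSeries (Fin 2) A) : MvPowerSeries (Fin 2) A :=
  fun s => ∑ n ∈ Finset.range (s 1 + 1),
    MvPowerSeries.coeff s
      (binomK A n * (algebraMap K3 A (r * π3) • (MvPowerSeries.X 1 * g)) ^ n)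


lemma omega_rel : ω3 ^ 2 + ω3 + 1 = 0 := by
  have : (Ideal.Quotient.mk (Ideal.span {(Polynomial.X : Polynomial ℚ_[3]) ^ 2 + Polynomial.X + 1}))
      ((Polynomial.X : Polynomial ℚ_[3]) ^ 2 + Polynomial.X + 1) = 0 := by
    rw [Ideal.Quotient.eq_zero_iff_mem]
    exact Ideal.subset_span rfl
  simpa [ω3, map_add, map_pow] using this

lemma omega_cube : ω3 ^ 3 = 1 := by
  linear_combination (ω3 - 1) * omega_rel

lemma pi_sq : π3 ^ 2 = -3 * ω3 := by
  unfold π3; linear_combination omega_rel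

lemma omega_integral : IsIntegral ℤ_[3] ω3 := by
  refine ⟨Polynomial.X ^ 2 + Polynomial.X + 1, by monicity!, ?_⟩
  simp only [Polynomial.eval₂_add, Polynomial.eval₂_pow, Polynomial.eval₂_X,
    Polynomial.eval₂_one]
  exact omega_rel

lemma pi_integral : IsIntegral ℤ_[3] π3 := omega_integral.sub isIntegral_one

lemma neg_one_integral : IsIntegral ℤ_[3] (-1 : K3) := isIntegral_one.neg

noncomputable def tK (n : ℕ) : K3 :=
  (-1) ^ padicValNat 3 (n+1).factorial * ω3 ^ padicValNat 3 (n+1).factorial *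
    π3 ^ (n - 2 * padicValNat 3 (n+1).factorial) *
    algebraMap ℤ_[3] K3
      (Ring.inverse ((((n+1).factorial / 3 ^ padicValNat 3 (n+1).factorial : ℕ)) : ℤ_[3]))

lemma two_val_le (n : ℕ) : 2 * padicValNat 3 (n+1).factorial ≤ n := by
  have h := sub_one_mul_padicValNat_factorial (p := 3) (n+1)
  have hd : (Nat.digits 3 (n+1)).sum ≠ 0 := by
    intro h0
    have hne : Nat.digits 3 (n+1) ≠ [] := Nat.digits_ne_nil_iff_ne_zero.2 (Nat.succ_ne_zero n)
    have hlast := Nat.getLast_digit_ne_zero 3 (Nat.succ_ne_zero n)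
    exact hlast (List.sum_eq_zero_iff.1 h0 _ (List.getLast_mem hne))
  omega

lemma m_unit (n : ℕ) :
    IsUnit ((((n+1).factorial / 3 ^ padicValNat 3 (n+1).factorial : ℕ)) : ℤ_[3]) := by
  have h3 : Nat.Prime 3 := by norm_num
  have hfac : ((n+1).factorial).factorization 3 = padicValNat 3 (n+1).factorial := by
    rw [Nat.factorization_def _ h3]
  have hnd : ¬ (3 ∣ ((n+1).factorial / 3 ^ padicValNat 3 (n+1).factorial : ℕ)) := by
    rw [← hfac]
    exact Nat.not_dvd_ordCompl h3 (Nat.factorial_ne_zero _)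
  rw [PadicInt.isUnit_iff]
  refine le_antisymm (PadicInt.norm_le_one _) (not_lt.1 fun hlt => hnd ?_)
  have := (PadicInt.norm_int_lt_one_iff_dvd
    (p := 3) (((n+1).factorial / 3 ^ padicValNat 3 (n+1).factorial : ℕ) : ℤ)).1 (by
      push_cast at hlt ⊢; exact_mod_cast hlt)
  exact_mod_cast this

lemma three_eq : (3 : K3) = -(π3 ^ 2 * ω3 ^ 2) := by
  linear_combination ω3 ^ 2 * pi_sq - 3 * omega_cube

lemma fact_mul_tK (n : ℕ) : (((n+1).factorial : ℕ) : K3) * tK n = π3 ^ n := by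
  set v := padicValNat 3 (n+1).factorial with hv
  set m : ℕ := (n+1).factorial / 3 ^ v with hm
  have hord : 3 ^ v * m = (n+1).factorial := by
    rw [hm, hv, ← Nat.factorization_def _ (by norm_num : Nat.Prime 3)]
    exact Nat.ordProj_mul_ordCompl_eq_self _ 3
  have hminv : ((m : ℕ) : K3) * algebraMap ℤ_[3] K3 (Ring.inverse ((m : ℕ) : ℤ_[3])) = 1 := by
    rw [← map_natCast (algebraMap ℤ_[3] K3) m, ← map_mul,
      Ring.mul_inverse_cancel _ (m_unit n), map_one]
  have h2v : 2 * v ≤ n := two_val_le n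
  calc (((n+1).factorial : ℕ) : K3) * tK n
      = ((3 ^ v * m : ℕ) : K3) * tK n := by rw [hord]
    _ = ((π3 ^ 2) ^ v * π3 ^ (n - 2 * v)) * ((ω3 ^ 2) ^ v * ω3 ^ v) *
          ((-1 : K3) ^ v * (-1 : K3) ^ v) *
          (((m : ℕ) : K3) * algebraMap ℤ_[3] K3 (Ring.inverse ((m : ℕ) : ℤ_[3]))) := by
        unfold tK
        push_cast
        rw [three_eq]
        ring
    _ = π3 ^ n := by
        have e1 : (π3 ^ 2) ^ v * π3 ^ (n - 2 * v) = π3 ^ n := by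
          rw [← pow_mul, ← pow_add]; congr 1; omega
        have e2 : (ω3 ^ 2) ^ v * ω3 ^ v = 1 := by
          rw [← pow_mul, ← pow_add, show 2 * v + v = 3 * v by ring, pow_mul, omega_cube, one_pow]
        have e3 : ((-1 : K3)) ^ v * (-1) ^ v = 1 := by rw [← mul_pow]; norm_num
        rw [hminv, e1, e2, e3, mul_one, mul_one, mul_one]

lemma tK_eq (n : ℕ) :
    algebraMap ℚ K3 ((((n+1).factorial : ℚ))⁻¹) * π3 ^ n = tK n := by
  have hf : ((n+1).factorial : ℚ) ≠ 0 := Nat.cast_ne_zero.2 (Nat.factorial_ne_zero _)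
  have h1 : algebraMap ℚ K3 ((((n+1).factorial : ℚ))⁻¹) * (((n+1).factorial : ℕ) : K3) = 1 := by
    rw [← map_natCast (algebraMap ℚ K3) (n+1).factorial, ← map_mul,
      inv_mul_cancel₀ hf, map_one]
  calc algebraMap ℚ K3 ((((n+1).factorial : ℚ))⁻¹) * π3 ^ n
      = algebraMap ℚ K3 ((((n+1).factorial : ℚ))⁻¹) *
          ((((n+1).factorial : ℕ) : K3) * tK n) := by rw [fact_mul_tK]
    _ = tK n := by rw [← mul_assoc, h1, one_mul]

lemma tK_integral (n : ℕ) : IsIntegral ℤ_[3] (tK n) :=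
  (((neg_one_integral.pow _).mul (omega_integral.pow _)).mul (pi_integral.pow _)).mul
    (isIntegral_algebraMap)


open MvPowerSeries

section Helpers
variable {S : Type*} [CommRing S]

lemma fin2_decomp (s : Fin 2 →₀ ℕ) : s = Finsupp.single 0 (s 0) + Finsupp.single 1 (s 1) := by
  ext i; fin_cases i <;> simp

lemma only_mul {t : Fin 2} {f h : MvPowerSeries (Fin 2) S}
    (hf : ∀ s, s t ≠ 0 → coeff s f = 0) (hh : ∀ s, s t ≠ 0 → coeff s h = 0) :
    ∀ s, s t ≠ 0 → coeff s (f * h) = 0 := by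
  intro s hs
  classical
  rw [coeff_mul]
  apply Finset.sum_eq_zero
  intro p hp
  rw [Finset.HasAntidiagonal.mem_antidiagonal] at hp
  have hsum : p.1 t + p.2 t = s t := by rw [← hp]; simp
  by_cases h1 : p.1 t = 0
  · have h2 : p.2 t ≠ 0 := by omega
    rw [hh _ h2, mul_zero]
  · rw [hf _ h1, zero_mul]

lemma sep_mul {f h : MvPowerSeries (Fin 2) S}
    (hf : ∀ s, s 1 ≠ 0 → coeff s f = 0) (hh : ∀ s, s 0 ≠ 0 → coeff s h = 0) (i j : ℕ) :
    coeff (Finsupp.single 0 i + Finsupp.single 1 j) (f * h) =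
      coeff (Finsupp.single 0 i) f * coeff (Finsupp.single 1 j) h := by
  rw [coeff_mul]
  refine Finset.sum_eq_single_of_mem (f := fun p => coeff p.1 f * coeff p.2 h)
    (Finsupp.single 0 i, Finsupp.single 1 j) (Finset.HasAntidiagonal.mem_antidiagonal.mpr rfl) ?_
  intro p hp hne
  rw [Finset.HasAntidiagonal.mem_antidiagonal] at hp
  by_cases h1 : p.1 1 = 0
  · by_cases h2 : p.2 0 = 0
    · exfalso; apply hne
      have hp0 : p.1 0 + p.2 0 = i := by
        have := DFunLike.congr_fun hp 0; simpa using this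
      have hp1 : p.1 1 + p.2 1 = j := by
        have := DFunLike.congr_fun hp 1; simpa using this
      have hi : p.1 0 = i := by omega
      have hj : p.2 1 = j := by omega
      have e1 : p.1 = Finsupp.single 0 i := by
        rw [fin2_decomp p.1, h1, hi]; simp
      have e2 : p.2 = Finsupp.single 1 j := by
        rw [fin2_decomp p.2, h2, hj]; simp
      exact Prod.ext e1 e2
    · exact mul_eq_zero_of_right _ (hh _ h2)
  · exact mul_eq_zero_of_left (hf _ h1) _

lemma sum_factor {ι : Type*} (R : Subring S) (ρ : S) (T : Finset ι) (f : ι → S)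
    (h : ∀ p ∈ T, ∃ c ∈ R, f p = ρ * c) : ∃ c ∈ R, ∑ p ∈ T, f p = ρ * c := by
  classical
  induction T using Finset.induction_on with
  | empty => exact ⟨0, R.zero_mem, by simp⟩
  | @insert x T hx ih =>
    obtain ⟨c1, hc1, e1⟩ := h x (Finset.mem_insert_self _ _)
    obtain ⟨c2, hc2, e2⟩ := ih fun p hp => h p (Finset.mem_insert_of_mem hp)
    exact ⟨c1 + c2, R.add_mem hc1 hc2, by rw [Finset.sum_insert hx, e1, e2, mul_add]⟩

/-- The product `(k-1)(k-2)⋯(k-n)`. -/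
noncomputable def QQ (S : Type*) [CommRing S] (n : ℕ) : MvPowerSeries (Fin 2) S :=
  ∏ i ∈ Finset.range n, (MvPowerSeries.X 0 - ((i + 1 : ℕ) : MvPowerSeries (Fin 2) S))

lemma QQ_succ (n : ℕ) :
    QQ S (n + 1) = QQ S n * (MvPowerSeries.X 0 - ((n + 1 : ℕ) : MvPowerSeries (Fin 2) S)) :=
  Finset.prod_range_succ _ n

lemma lin_only0 (k : ℕ) :
    ∀ s : Fin 2 →₀ ℕ, s 1 ≠ 0 →
      coeff s (MvPowerSeries.X 0 - ((k : ℕ) : MvPowerSeries (Fin 2) S)) = 0 := by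
  classical
  intro s hs
  rw [map_sub, ← map_natCast ((MvPowerSeries.C (σ := Fin 2) (R := S))) k, coeff_X, coeff_C]
  rw [if_neg, if_neg, sub_zero]
  · intro h; rw [h] at hs; simp at hs
  · intro h; rw [h] at hs; simp at hs

lemma QQ_only0 (n : ℕ) : ∀ s : Fin 2 →₀ ℕ, s 1 ≠ 0 → coeff s (QQ S n) = 0 := by
  classical
  induction n with
  | zero =>
    intro s hs
    rw [QQ, Finset.prod_range_zero, coeff_one, if_neg]
    intro h; rw [h] at hs; simp at hs
  | succ n ih =>
    rw [QQ_succ]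
    exact only_mul ih (lin_only0 (n+1))

lemma QQ_mem (R : Subring S) (n : ℕ) : ∀ s : Fin 2 →₀ ℕ, coeff s (QQ S n) ∈ R := by
  classical
  induction n with
  | zero =>
    intro s
    rw [QQ, Finset.prod_range_zero, coeff_one]
    split
    exacts [R.one_mem, R.zero_mem]
  | succ n ih =>
    intro s
    rw [QQ_succ, coeff_mul]
    apply Subring.sum_mem
    intro p _
    apply R.mul_mem (ih _)
    rw [map_sub, ← map_natCast ((MvPowerSeries.C (σ := Fin 2) (R := S))) (n+1), coeff_X, coeff_C]
    apply R.sub_mem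
    · split; exacts [R.one_mem, R.zero_mem]
    · split; exacts [natCast_mem R _, R.zero_mem]

lemma pow_only1 {f : MvPowerSeries (Fin 2) S} (hf : ∀ s, s 0 ≠ 0 → coeff s f = 0) (n : ℕ) :
    ∀ s : Fin 2 →₀ ℕ, s 0 ≠ 0 → coeff s (f ^ n) = 0 := by
  classical
  induction n with
  | zero =>
    intro s hs
    rw [pow_zero, coeff_one, if_neg]
    intro h; rw [h] at hs; simp at hs
  | succ n ih =>
    rw [pow_succ]
    exact only_mul ih hf

lemma gpow_coeff (R : Subring S) (ρ : S) {f : MvPowerSeries (Fin 2) S}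
    (hf0 : ∀ s, s 0 ≠ 0 → coeff s f = 0)
    (hfR : ∀ m : ℕ, ∃ c ∈ R, coeff (Finsupp.single 1 m) f = ρ ^ m * c) (n : ℕ) :
    ∀ m : ℕ, ∃ c ∈ R, coeff (Finsupp.single 1 m) (f ^ n) = ρ ^ m * c := by
  classical
  induction n with
  | zero =>
    intro m
    match m with
    | 0 => exact ⟨1, R.one_mem, by simp [coeff_one]⟩
    | m+1 =>
      refine ⟨0, R.zero_mem, ?_⟩
      rw [pow_zero, coeff_one, if_neg (by simp [Finsupp.single_eq_zero]), mul_zero]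
  | succ n ih =>
    intro m
    rw [pow_succ, coeff_mul]
    apply sum_factor R (ρ ^ m)
    intro p hp
    rw [Finset.HasAntidiagonal.mem_antidiagonal] at hp
    have hp0 : p.1 0 + p.2 0 = 0 := by
      have := DFunLike.congr_fun hp 0; simpa using this
    have hp1 : p.1 1 + p.2 1 = m := by
      have := DFunLike.congr_fun hp 1; simpa using this
    have e1 : p.1 = Finsupp.single 1 (p.1 1) := by
      rw [fin2_decomp p.1, show p.1 0 = 0 by omega]; simp
    have e2 : p.2 = Finsupp.single 1 (p.2 1) := by
      rw [fin2_decomp p.2, show p.2 0 = 0 by omega]; simp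
    obtain ⟨c1, hc1, f1⟩ := ih (p.1 1)
    obtain ⟨c2, hc2, f2⟩ := hfR (p.2 1)
    refine ⟨c1 * c2, R.mul_mem hc1 hc2, ?_⟩
    rw [e1, e2, f1, f2, show m = p.1 1 + p.2 1 from hp1.symm, pow_add]; ring

end Helpers

section BinomKLemmas

variable (A : Type) [CommRing A] [Algebra ℚ A]

lemma binomK_zero : binomK A 0 = 1 := by
  rw [binomK]
  simp

lemma rat_smul_eq_C_mul (q : ℚ) (f : MvPowerSeries (Fin 2) A) :
    q • f = (MvPowerSeries.C (σ := Fin 2) (R := A)) (algebraMap ℚ A q) * f := by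
  ext s
  rw [MvPowerSeries.coeff_C_mul]
  exact Algebra.smul_def q _

lemma binomK_succ (n : ℕ) :
    binomK A (n + 1) =
      (MvPowerSeries.C (σ := Fin 2) (R := A)) (algebraMap ℚ A (((n+1).factorial : ℚ)⁻¹)) *
        (QQ A n * MvPowerSeries.X 0) := by
  rw [binomK, rat_smul_eq_C_mul]
  congr 1
  rw [Finset.prod_range_succ']
  rw [QQ]
  norm_num

lemma coeff_X_mul' (t : Fin 2) (f : MvPowerSeries (Fin 2) A) (s : Fin 2 →₀ ℕ) :
    MvPowerSeries.coeff s (MvPowerSeries.X t * f) =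
      if s t ≠ 0 then MvPowerSeries.coeff (s - Finsupp.single t 1) f else 0 := by
  have hX : (MvPowerSeries.X t : MvPowerSeries (Fin 2) A)
      = MvPowerSeries.monomial (Finsupp.single t 1) 1 := by
    rw [← pow_one (MvPowerSeries.X t : MvPowerSeries (Fin 2) A), MvPowerSeries.X_pow_eq]
  rw [hX, MvPowerSeries.coeff_monomial_mul]
  have : Finsupp.single t 1 ≤ s ↔ s t ≠ 0 := by
    rw [Finsupp.single_le_iff]
    omega
  split <;> split <;> simp_all

lemma Xpow_only (t : Fin 2) (u : Fin 2) (hu : u ≠ t) (n : ℕ) :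
    ∀ s : Fin 2 →₀ ℕ, s u ≠ 0 →
      MvPowerSeries.coeff s ((MvPowerSeries.X t : MvPowerSeries (Fin 2) A) ^ n) = 0 := by
  intro s hs
  rw [MvPowerSeries.X_pow_eq, MvPowerSeries.coeff_monomial]
  rw [if_neg]
  intro h
  rw [h] at hs
  simp [Finsupp.single_apply, hu.symm] at hs

end BinomKLemmas

/-- Lemma 3.2 (binomial lemma): if `R` is a commutative ring containing `O_K` (realized as a
subring `R` of a `K`-algebra `A` containing the image of every element of `K` integral over
`ℤ₃`), `r ∈ O_K`, and `g ∈ R[[rξ]]`, then `(1 + rπξg)^k ∈ 1 + rπk·ξ·R[[k, rξ]]`. -/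
theorem stmt15 (A : Type) [CommRing A] [Algebra K3 A] [Algebra ℚ A] [IsScalarTower ℚ K3 A]
    (R : Subring A) (hR : ∀ x : K3, IsIntegral ℤ_[3] x → algebraMap K3 A x ∈ R)
    (r : K3) (hr : IsIntegral ℤ_[3] r)
    (g : MvPowerSeries (Fin 2) A)
    (hg0 : ∀ s : Fin 2 →₀ ℕ, s 0 ≠ 0 → MvPowerSeries.coeff s g = 0)
    (hgR : ∀ n : ℕ, ∃ c ∈ R,
      MvPowerSeries.coeff (Finsupp.single 1 n) g = (algebraMap K3 A r) ^ n * c) :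
    ∃ h : MvPowerSeries (Fin 2) A,
      (∀ i j : ℕ, ∃ c ∈ R,
        MvPowerSeries.coeff (Finsupp.single 0 i + Finsupp.single 1 j) h =
          (algebraMap K3 A r) ^ j * c) ∧
      binomialExpansion A r g =
        1 + algebraMap K3 A (r * π3) •
          (MvPowerSeries.X 0 * (MvPowerSeries.X 1 * h)) := by
  classical
  set ρ : A := algebraMap K3 A r with hρ
  -- the series `H n` such that `C(k,n+1)(rπξg)^{n+1} = rπ·k·ξ·H n`
  set H : ℕ → MvPowerSeries (Fin 2) A := fun n =>
    (MvPowerSeries.C (σ := Fin 2) (R := A)) (algebraMap K3 A (r ^ n * tK n)) *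
      (QQ A n * ((MvPowerSeries.X 1) ^ n * g ^ (n + 1))) with hH
  set h : MvPowerSeries (Fin 2) A := fun s =>
    ∑ n ∈ Finset.range (s 1 + 1), MvPowerSeries.coeff s (H n) with hmk
  have hcoeff : ∀ s : Fin 2 →₀ ℕ, MvPowerSeries.coeff s h
      = ∑ n ∈ Finset.range (s 1 + 1), MvPowerSeries.coeff s (H n) := fun s => rfl
  -- coefficients of H n
  have honly1 : ∀ n : ℕ, ∀ s : Fin 2 →₀ ℕ, s 0 ≠ 0 →
      MvPowerSeries.coeff s ((MvPowerSeries.X 1) ^ n * g ^ (n+1)) = 0 := fun n =>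
    only_mul (Xpow_only A 1 0 (by decide) n) (pow_only1 hg0 (n+1))
  have HcoeffR : ∀ (n i j : ℕ), ∃ c ∈ R,
      MvPowerSeries.coeff (Finsupp.single 0 i + Finsupp.single 1 j) (H n) = ρ ^ j * c := by
    intro n i j
    rw [hH]
    rw [MvPowerSeries.coeff_C_mul,
      sep_mul (QQ_only0 n) (honly1 n) i j]
    rw [MvPowerSeries.X_pow_eq, MvPowerSeries.coeff_monomial_mul]
    by_cases hnj : n ≤ j
    · rw [if_pos (Finsupp.single_le_iff.mpr (by simp [hnj]))]
      rw [← Finsupp.single_tsub]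
      obtain ⟨c, hc, e⟩ := gpow_coeff R ρ hg0 hgR (n+1) (j - n)
      refine ⟨MvPowerSeries.coeff (Finsupp.single 0 i) (QQ A n) *
        (algebraMap K3 A (tK n) * c),
        R.mul_mem (QQ_mem R n _) (R.mul_mem (hR _ (tK_integral n)) hc), ?_⟩
      rw [e, map_mul, map_pow, ← hρ]
      have : ρ ^ n * (ρ ^ (j - n)) = ρ ^ j := by
        rw [← pow_add]
        congr 1
        omega
      calc ρ ^ n * algebraMap K3 A (tK n) *
            (MvPowerSeries.coeff (Finsupp.single 0 i) (QQ A n) * (1 * (ρ ^ (j-n) * c)))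
          = (ρ ^ n * ρ ^ (j - n)) * (MvPowerSeries.coeff (Finsupp.single 0 i) (QQ A n) *
              (algebraMap K3 A (tK n) * c)) := by ring
        _ = _ := by rw [this]
    · rw [if_neg]
      · exact ⟨0, R.zero_mem, by simp⟩
      · rw [Finsupp.single_le_iff]
        simp
        omega
  refine ⟨h, fun i j => ?_, ?_⟩
  · have hval : ((Finsupp.single 0 i + Finsupp.single 1 j : Fin 2 →₀ ℕ)) 1 = j := by simp
    rw [hcoeff, hval]
    apply sum_factor R (ρ ^ j)
    intro n _
    exact HcoeffR n i j
  -- the power series identity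
  have hbin : ∀ n : ℕ,
      binomK A (n+1) * (algebraMap K3 A (r * π3) • (MvPowerSeries.X 1 * g)) ^ (n+1) =
        algebraMap K3 A (r * π3) • (MvPowerSeries.X 0 * (MvPowerSeries.X 1 * H n)) := by
    intro n
    rw [binomK_succ, MvPowerSeries.smul_eq_C_mul, MvPowerSeries.smul_eq_C_mul, hH]
    rw [mul_pow, mul_pow, ← map_pow ((MvPowerSeries.C (σ := Fin 2) (R := A))), ← map_pow (algebraMap K3 A)]
    have hs : ((MvPowerSeries.C (σ := Fin 2) (R := A)) (algebraMap ℚ A (((n+1).factorial : ℚ)⁻¹)) *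
          (MvPowerSeries.C (σ := Fin 2) (R := A)) (algebraMap K3 A ((r * π3) ^ (n+1)))
          : MvPowerSeries (Fin 2) A) =
        (MvPowerSeries.C (σ := Fin 2) (R := A)) (algebraMap K3 A (r * π3)) *
          (MvPowerSeries.C (σ := Fin 2) (R := A)) (algebraMap K3 A (r ^ n * tK n)) := by
      rw [← map_mul, ← map_mul]
      congr 1
      rw [IsScalarTower.algebraMap_apply ℚ K3 A, ← map_mul, ← map_mul]
      congr 1
      linear_combination (r ^ (n+1) * π3) * tK_eq n
    linear_combination (QQ A n * MvPowerSeries.X 0 * (MvPowerSeries.X 1) ^ (n+1) *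
      g ^ (n+1)) * hs
  -- prove equality coefficientwise
  apply MvPowerSeries.ext
  intro s
  have lhs_eq : MvPowerSeries.coeff s (binomialExpansion A r g) =
      ∑ n ∈ Finset.range (s 1 + 1), MvPowerSeries.coeff s
        (binomK A n * (algebraMap K3 A (r * π3) • (MvPowerSeries.X 1 * g)) ^ n) := rfl
  rw [lhs_eq, Finset.sum_range_succ', map_add]
  have f0 : MvPowerSeries.coeff s
      (binomK A 0 * (algebraMap K3 A (r * π3) • (MvPowerSeries.X 1 * g)) ^ 0) =
      MvPowerSeries.coeff s 1 := by
    rw [pow_zero, mul_one, binomK_zero]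
  rw [f0]
  have fsucc : ∀ n : ℕ, MvPowerSeries.coeff s
      (binomK A (n+1) * (algebraMap K3 A (r * π3) • (MvPowerSeries.X 1 * g)) ^ (n+1)) =
      algebraMap K3 A (r * π3) *
        MvPowerSeries.coeff s (MvPowerSeries.X 0 * (MvPowerSeries.X 1 * H n)) := by
    intro n
    rw [hbin n, MvPowerSeries.coeff_smul]
  rw [Finset.sum_congr rfl fun n _ => fsucc n, ← Finset.mul_sum,
    MvPowerSeries.coeff_smul]
  rw [add_comm]
  congr 1
  congr 1
  -- Σ_{n < s 1} coeff s (X0 * (X1 * H n)) = coeff s (X0 * (X1 * h))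
  by_cases hs0 : s 0 = 0
  · rw [coeff_X_mul', if_neg (by simpa using hs0)]
    apply Finset.sum_eq_zero
    intro n _
    rw [coeff_X_mul', if_neg (by simpa using hs0)]
  · by_cases hs1 : s 1 = 0
    · rw [coeff_X_mul', if_pos (by simpa using hs0), coeff_X_mul', if_neg (by
        simp [Finsupp.tsub_apply, hs1])]
      rw [hs1]
      simp
    · have hsub1 : ((s - Finsupp.single 0 1 : Fin 2 →₀ ℕ)) 1 = s 1 := by
        simp [Finsupp.tsub_apply, Finsupp.single_apply]
      rw [coeff_X_mul', if_pos (by simpa using hs0), coeff_X_mul',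
        if_pos (by simp [hsub1, hs1])]
      have e : ∀ n : ℕ, MvPowerSeries.coeff s
          (MvPowerSeries.X 0 * (MvPowerSeries.X 1 * H n)) =
          MvPowerSeries.coeff (s - Finsupp.single 0 1 - Finsupp.single 1 1) (H n) := by
        intro n
        rw [coeff_X_mul', if_pos (by simpa using hs0), coeff_X_mul',
          if_pos (by simp [hsub1, hs1])]
      rw [Finset.sum_congr rfl fun n _ => e n, hcoeff]
      have hval : ((s - Finsupp.single 0 1 - Finsupp.single 1 1 : Fin 2 →₀ ℕ)) 1 + 1 = s 1 := by
        simp [Finsupp.tsub_apply, Finsupp.single_apply]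
        omega
      rw [hval]
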